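/- The ℚ-linear map from ℋ^+ ⊗_ℚ ℚ[X] to ℋ sending h ⊗ X^k to h * b^{*k} (where b^{*k} denotes the k-fold shuffle power of the one-letter word b) is a vector-space isomorphism; equivalently, ℋ is the direct sum over k ≥ 0 of the subspaces ℋ^+ * b^{*k}. -/

import Mathlib

inductive Letter | a | b
deriving DecidableEq

abbrev Word := List Letter

/-- The algebra `ℋ`: formal `ℚ`-linear combinations of words. -/
abbrev H := Word →₀ ℚ

/-- The list of shuffles of two words (with multiplicity). -/
def shuffleList : Word → Word → List Word
  | [], v => [v]
  | u, [] => [u]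
  | x :: u, y :: v =>
      ((shuffleList u (y :: v)).map fun t => x :: t) ++
      ((shuffleList (x :: u) v).map fun t => y :: t)
termination_by u v => u.length + v.length
decreasing_by all_goals simp

/-- The shuffle product `u * v` of two words, as an element of `ℋ`. -/
noncomputable def shW (u v : Word) : H :=
  ((shuffleList u v).map fun t => Finsupp.single t (1 : ℚ)).sum

/-- The shuffle product of a word with an element of `ℋ`, extended linearly. -/
noncomputable def shWH (u : Word) (g : H) : H := g.sum fun v cv => cv • shW u v

/-- Concatenation of a word with an element of `ℋ`, extended linearly. -/
noncomputable def concatWH (u : Word) (g : H) : H :=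
  g.sum fun v c => Finsupp.single (u ++ v) c

/-- The list of all words of length `m`. -/
def wordsOfLength : ℕ → List Word
  | 0 => [[]]
  | n + 1 =>
      ((wordsOfLength n).map fun t => Letter.a :: t) ++
      ((wordsOfLength n).map fun t => Letter.b :: t)

/-- `(a+b)^m`, the `m`-fold concatenation power of `a+b` expanded multilinearly:
the sum of all words of length `m`. -/
noncomputable def abPow (m : ℕ) : H :=
  ((wordsOfLength m).map fun t => Finsupp.single t (1 : ℚ)).sum

/-- `(b-a)^m`, the `m`-fold concatenation power of `b-a` expanded multilinearly:
the signed sum of all words of length `m`. -/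
noncomputable def bmaPow (m : ℕ) : H :=
  ((wordsOfLength m).map fun t =>
    Finsupp.single t ((-1 : ℚ) ^ t.count Letter.a)).sum

/-- `W⁺` : words not beginning with `b`. -/
def WPlus (w : Word) : Prop := w.head? ≠ some Letter.b

/-- The shuffle product on `ℋ`, extended bilinearly from words. -/
noncomputable def shH (f g : H) : H :=
  f.sum fun u cu => g.sum fun v cv => (cu * cv) • shW u v

/-- `h^{*k}` : the `k`-fold shuffle power of `h ∈ ℋ`. -/
noncomputable def shPow (h : H) : ℕ → H
  | 0 => Finsupp.single [] 1
  | n + 1 => shH (shPow h n) h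

/-- The subspace `ℋ⁺ * b^{*k}` of `ℋ`: the span of the shuffle products of the
basis words of `ℋ⁺` with the `k`-th shuffle power of the one-letter word `b`. -/
noncomputable def SHb (k : ℕ) : Submodule ℚ H :=
  Submodule.span ℚ
    {x : H | ∃ w : Word, WPlus w ∧
      x = shH (Finsupp.single w 1) (shPow (Finsupp.single [Letter.b] 1) k)}

-- ################ aux
lemma length_mem_shuffleList : ∀ u v t, t ∈ shuffleList u v → t.length = u.length + v.length := by
  intro u v
  induction u, v using shuffleList.induct with
  | case1 v => intro t ht; simp [shuffleList] at ht; simp [ht]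
  | case2 u h =>
      intro t ht
      match u, h with
      | x :: u, _ => simp [shuffleList] at ht; simp [ht]
  | case3 x u y v ih1 ih2 =>
      intro t ht
      rw [shuffleList] at ht
      simp only [List.mem_append, List.mem_map] at ht
      rcases ht with ⟨s, hs, rfl⟩ | ⟨s, hs, rfl⟩
      · have := ih1 s hs; simp at this ⊢; omega
      · have := ih2 s hs; simp at this ⊢; omega


abbrev bW (k : ℕ) : Word := List.replicate k Letter.b

def leadB : Word → ℕ
  | [] => 0
  | Letter.a :: _ => 0
  | Letter.b :: w => leadB w + 1

def strip : Word → Word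
  | [] => []
  | Letter.a :: w => Letter.a :: w
  | Letter.b :: w => strip w

lemma bW_append_strip : ∀ w : Word, bW (leadB w) ++ strip w = w
  | [] => rfl
  | Letter.a :: w => rfl
  | Letter.b :: w => by
      simp only [leadB, strip, bW, List.replicate_succ, List.cons_append]
      rw [bW_append_strip w]

lemma wplus_strip : ∀ w : Word, WPlus (strip w)
  | [] => by simp [strip, WPlus]
  | Letter.a :: w => by simp [strip, WPlus]
  | Letter.b :: w => wplus_strip w

lemma leadB_eq_zero {u : Word} (hu : WPlus u) : leadB u = 0 := by
  match u with
  | [] => rfl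
  | Letter.a :: w => rfl
  | Letter.b :: w => simp [WPlus] at hu

lemma strip_eq_self {u : Word} (hu : WPlus u) : strip u = u := by
  match u with
  | [] => rfl
  | Letter.a :: w => rfl
  | Letter.b :: w => simp [WPlus] at hu

lemma leadB_bW_append (k : ℕ) {u : Word} (hu : WPlus u) : leadB (bW k ++ u) = k := by
  induction k with
  | zero => simpa using leadB_eq_zero hu
  | succ k ih =>
      have h2 : bW (k+1) ++ u = Letter.b :: (bW k ++ u) := by simp [bW, List.replicate_succ]
      rw [h2]
      show leadB (bW k ++ u) + 1 = k + 1
      rw [ih]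

lemma strip_bW_append (k : ℕ) {u : Word} (hu : WPlus u) : strip (bW k ++ u) = u := by
  induction k with
  | zero => simpa using strip_eq_self hu
  | succ k ih => simpa only [bW, List.replicate_succ, List.cons_append, strip] using ih

lemma length_strip_add (w : Word) : (strip w).length + leadB w = w.length := by
  conv_rhs => rw [← bW_append_strip w]
  simp [bW]; omega

-- cons as a linear map
noncomputable def consL (c : Letter) : H →ₗ[ℚ] H := Finsupp.lmapDomain ℚ ℚ (c :: ·)

@[simp] lemma consL_single (c : Letter) (t : Word) (x : ℚ) :
    consL c (Finsupp.single t x) = Finsupp.single (c :: t) x := Finsupp.mapDomain_single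

lemma shW_nil_left (v : Word) : shW [] v = Finsupp.single v 1 := by simp [shW, shuffleList]

lemma shW_nil_right (u : Word) : shW u [] = Finsupp.single u 1 := by
  match u with
  | [] => simp [shW, shuffleList]
  | x :: u => simp [shW, shuffleList]

lemma shW_cons_cons (x y : Letter) (u v : Word) :
    shW (x :: u) (y :: v) = consL x (shW u (y :: v)) + consL y (shW (x :: u) v) := by
  rw [shW, shuffleList]
  rw [List.map_append, List.sum_append]
  congr 1 <;>
  · rw [shW, map_list_sum]
    simp [List.map_map, Function.comp_def]

lemma shH_single_single (u v : Word) (c d : ℚ) :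
    shH (Finsupp.single u c) (Finsupp.single v d) = (c * d) • shW u v := by
  unfold shH
  rw [Finsupp.sum_single_index, Finsupp.sum_single_index]
  · simp
  · rw [Finsupp.sum_single_index] <;> simp

lemma shuffleList_bW_b (k : ℕ) :
    shuffleList (bW k) [Letter.b] = List.replicate (k + 1) (bW (k + 1)) := by
  induction k with
  | zero => simp [bW, shuffleList]
  | succ k ih =>
      show shuffleList (Letter.b :: bW k) (Letter.b :: []) = _
      rw [shuffleList, ih]
      simp [bW, List.replicate_succ, shuffleList, List.map_replicate]
      rw [← List.replicate_succ', List.replicate_succ]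

lemma shW_bW_b (k : ℕ) : shW (bW k) [Letter.b] = ((k : ℚ) + 1) • Finsupp.single (bW (k+1)) 1 := by
  rw [shW, shuffleList_bW_b]
  simp [List.map_replicate, List.sum_replicate, ← Nat.cast_smul_eq_nsmul ℚ]

lemma shPow_b (k : ℕ) :
    shPow (Finsupp.single [Letter.b] 1) k = (k.factorial : ℚ) • Finsupp.single (bW k) 1 := by
  induction k with
  | zero => simp [shPow, bW]
  | succ k ih =>
      rw [shPow, ih]
      rw [show ((k.factorial : ℚ) • Finsupp.single (bW k) 1 : H)
            = Finsupp.single (bW k) (k.factorial : ℚ) by simp [Finsupp.smul_single]]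
      rw [shH_single_single, shW_bW_b]
      rw [smul_smul, Nat.factorial_succ]
      push_cast
      ring_nf

/-- Span of basis words of length `n` with fewer than `k` leading `b`'s. -/
noncomputable def Err (n k : ℕ) : Submodule ℚ H :=
  Submodule.span ℚ {x : H | ∃ v : Word, v.length = n ∧ leadB v < k ∧ x = Finsupp.single v 1}

lemma consL_b_Err {n k : ℕ} {x : H} (hx : x ∈ Err n k) :
    consL Letter.b x ∈ Err (n + 1) (k + 1) := by
  have : Submodule.map (consL Letter.b) (Err n k) ≤ Err (n + 1) (k + 1) := by
    rw [Err, Submodule.map_span, Submodule.span_le]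
    rintro y ⟨x, ⟨v, hv1, hv2, rfl⟩, rfl⟩
    apply Submodule.subset_span
    exact ⟨Letter.b :: v, by simp [hv1], by simp [leadB]; omega, by simp⟩
  exact this (Submodule.mem_map_of_mem hx)

lemma consL_a_shW_Err (u : Word) (k : ℕ) (hk : 0 < k) :
    consL Letter.a (shW u (bW k)) ∈ Err (u.length + k + 1) k := by
  rw [shW, map_list_sum]
  apply list_sum_mem
  intro x hx
  simp only [List.map_map, List.mem_map, Function.comp_def] at hx
  obtain ⟨t, ht, rfl⟩ := hx
  rw [consL_single]
  apply Submodule.subset_span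
  refine ⟨Letter.a :: t, ?_, ?_, rfl⟩
  · have := length_mem_shuffleList u (bW k) t ht
    simp at this ⊢; omega
  · simp [leadB]; omega

lemma key (k : ℕ) : ∀ (u : Word), WPlus u →
    shW u (bW k) - Finsupp.single (bW k ++ u) 1 ∈ Err (u.length + k) k := by
  induction k with
  | zero =>
      intro u hu
      simp [bW, shW_nil_right]
  | succ k ih =>
      intro u hu
      match u, hu with
      | [], _ =>
          rw [shW_nil_left]
          simp
      | Letter.b :: u, hu => simp [WPlus] at hu
      | Letter.a :: u, _ =>
          have hb : bW (k+1) = Letter.b :: bW k := List.replicate_succ ..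
          rw [hb, shW_cons_cons]
          have hD := ih (Letter.a :: u) (by simp [WPlus])
          have h1 : consL Letter.b (shW (Letter.a :: u) (bW k)
              - Finsupp.single (bW k ++ Letter.a :: u) 1)
              ∈ Err ((Letter.a :: u).length + k + 1) (k + 1) := consL_b_Err hD
          have h2 : consL Letter.a (shW u (Letter.b :: bW k)) ∈
              Err ((Letter.a :: u).length + (k+1)) (k+1) := by
            have := consL_a_shW_Err u (k+1) (by omega)
            rw [show bW (k+1) = Letter.b :: bW k from List.replicate_succ ..] at this
            convert this using 2
            simp; omega
          have hsplit : consL Letter.a (shW u (Letter.b :: bW k))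
              + consL Letter.b (shW (Letter.a :: u) (bW k))
              - Finsupp.single (Letter.b :: (bW k ++ Letter.a :: u)) 1
              = consL Letter.a (shW u (Letter.b :: bW k))
                + consL Letter.b (shW (Letter.a :: u) (bW k)
                  - Finsupp.single (bW k ++ Letter.a :: u) 1) := by
            rw [map_sub, consL_single]; abel
          rw [show (Letter.b :: bW k) ++ (Letter.a :: u)
              = Letter.b :: (bW k ++ Letter.a :: u) from rfl]
          rw [hsplit]
          apply Submodule.add_mem
          · exact h2
          · exact h1

-- ############ The map Φ
noncomputable def gen (w : Word) : H :=
  shH (Finsupp.single (strip w) 1) (shPow (Finsupp.single [Letter.b] 1) (leadB w))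

noncomputable def Phi : H →ₗ[ℚ] H := Finsupp.linearCombination ℚ gen

@[simp] lemma Phi_single (w : Word) : Phi (Finsupp.single w 1) = gen w := by
  simp [Phi, Finsupp.linearCombination_single]

lemma gen_eq (w : Word) :
    gen w = ((leadB w).factorial : ℚ) • shW (strip w) (bW (leadB w)) := by
  rw [gen, shPow_b]
  rw [show (((leadB w).factorial : ℚ) • Finsupp.single (bW (leadB w)) 1 : H)
        = Finsupp.single (bW (leadB w)) ((leadB w).factorial : ℚ) by
      rw [Finsupp.smul_single, smul_eq_mul, mul_one]]
  rw [shH_single_single, one_mul]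

lemma Phi_single_sub (w : Word) :
    Phi (Finsupp.single w 1) - ((leadB w).factorial : ℚ) • Finsupp.single w 1
      ∈ Err w.length (leadB w) := by
  rw [Phi_single, gen_eq, ← smul_sub]
  · have h := key (leadB w) (strip w) (wplus_strip w)
    rw [bW_append_strip w] at h
    rw [show (strip w).length + leadB w = w.length from length_strip_add w] at h
    exact Submodule.smul_mem _ _ h

/-- Words of a given length. -/
noncomputable def Hlen (n : ℕ) : Submodule ℚ H :=
  Finsupp.supported ℚ ℚ {w : Word | w.length = n}

lemma Err_le_Hlen (n k : ℕ) : Err n k ≤ Hlen n := by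
  rw [Err, Submodule.span_le]
  rintro x ⟨v, hv1, _, rfl⟩
  exact Finsupp.single_mem_supported ℚ 1 hv1

lemma single_mem_Hlen (w : Word) : Finsupp.single w (1:ℚ) ∈ Hlen w.length :=
  Finsupp.single_mem_supported ℚ 1 rfl

lemma Hlen_eq_span (n : ℕ) : Hlen n
    = Submodule.span ℚ ((fun i => Finsupp.single i (1:ℚ)) '' {w : Word | w.length = n}) :=
  Finsupp.supported_eq_span_single ℚ _

lemma map_Phi_Hlen_le (n : ℕ) : Submodule.map Phi (Hlen n) ≤ Hlen n := by
  conv_lhs => rw [Hlen_eq_span]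
  rw [Submodule.map_span, Submodule.span_le]
  rintro y ⟨x, ⟨w, hw, rfl⟩, rfl⟩
  have hw' : w.length = n := hw
  have h1 := Phi_single_sub w
  have h2 : Phi (Finsupp.single w 1)
      = (Phi (Finsupp.single w 1) - ((leadB w).factorial : ℚ) • Finsupp.single w 1)
        + ((leadB w).factorial : ℚ) • Finsupp.single w 1 := by abel
  rw [h2]
  apply Submodule.add_mem
  · exact hw' ▸ Err_le_Hlen w.length (leadB w) h1
  · exact Submodule.smul_mem _ _ (hw' ▸ single_mem_Hlen w)

lemma single_mem_map_Phi (k : ℕ) : ∀ w : Word, leadB w < k →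
    Finsupp.single w (1:ℚ) ∈ Submodule.map Phi (Hlen w.length) := by
  induction k with
  | zero => intro w hw; omega
  | succ k ih =>
      intro w hw
      have hErr : Err w.length (leadB w) ≤ Submodule.map Phi (Hlen w.length) := by
        rw [Err, Submodule.span_le]
        rintro x ⟨v, hv1, hv2, rfl⟩
        have := ih v (by omega)
        rwa [hv1] at this
      have h1 : Phi (Finsupp.single w 1) ∈ Submodule.map Phi (Hlen w.length) :=
        Submodule.mem_map_of_mem (single_mem_Hlen w)
      have h2 : ((leadB w).factorial : ℚ) • Finsupp.single w (1:ℚ)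
          ∈ Submodule.map Phi (Hlen w.length) := by
        have h3 := Submodule.sub_mem _ h1 (hErr (Phi_single_sub w))
        simpa using h3
      have hc : ((leadB w).factorial : ℚ) ≠ 0 := by
        exact_mod_cast (leadB w).factorial_ne_zero
      have := Submodule.smul_mem _ (((leadB w).factorial : ℚ)⁻¹) h2
      rwa [smul_smul, inv_mul_cancel₀ hc, one_smul] at this

lemma map_Phi_Hlen (n : ℕ) : Submodule.map Phi (Hlen n) = Hlen n := by
  refine le_antisymm (map_Phi_Hlen_le n) ?_
  conv_lhs => rw [Hlen_eq_span]
  rw [Submodule.span_le]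
  rintro x ⟨w, hw, rfl⟩
  have hw' : w.length = n := hw
  have := single_mem_map_Phi (leadB w + 1) w (by omega)
  rwa [hw'] at this

instance : Fintype Letter := ⟨{Letter.a, Letter.b}, fun x => by cases x <;> simp⟩

lemma fd_Hlen (n : ℕ) : FiniteDimensional ℚ (Hlen n) := by
  have hfin : {w : Word | w.length = n}.Finite := List.finite_length_eq Letter n
  haveI := hfin.to_subtype
  exact Module.Finite.equiv
    ((Finsupp.supportedEquivFinsupp (M := ℚ) (R := ℚ) {w : Word | w.length = n}) ≪≫ₗ
      (Finsupp.linearEquivFunOnFinite ℚ ℚ _)).symm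

instance (n : ℕ) : DecidablePred (· ∈ {w : Word | w.length = n}) :=
  fun w => decidable_of_iff (w.length = n) Iff.rfl

/-- projection onto words of length `n` -/
noncomputable def piL (n : ℕ) : H →ₗ[ℚ] H :=
  (Hlen n).subtype.comp (Finsupp.restrictDom ℚ ℚ {w : Word | w.length = n})

lemma piL_apply (n : ℕ) (x : H) :
    piL n x = x.filter (· ∈ {w : Word | w.length = n}) := rfl

lemma piL_mem_Hlen (n : ℕ) (x : H) : piL n x ∈ Hlen n :=
  (Finsupp.restrictDom ℚ ℚ {w : Word | w.length = n} x).2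

lemma piL_eq_self {n : ℕ} {x : H} (hx : x ∈ Hlen n) : piL n x = x := by
  ext w
  rw [piL_apply, Finsupp.filter_apply]
  split_ifs with h
  · rfl
  · by_contra hne
    exact h (hx (Finsupp.mem_support_iff.mpr fun h0 => hne h0.symm))

lemma piL_eq_zero {n m : ℕ} {x : H} (hx : x ∈ Hlen m) (hnm : m ≠ n) : piL n x = 0 := by
  ext w
  rw [piL_apply, Finsupp.filter_apply]
  split_ifs with h
  · by_contra hne
    exact hnm ((hx (Finsupp.mem_support_iff.mpr hne)).symm.trans h)
  · rfl

lemma Phi_single_mem (w : Word) (b : ℚ) : Phi (Finsupp.single w b) ∈ Hlen w.length := by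
  have : Finsupp.single w b = b • Finsupp.single w (1:ℚ) := by
    rw [Finsupp.smul_single, smul_eq_mul, mul_one]
  rw [this, map_smul]
  exact Submodule.smul_mem _ _
    (map_Phi_Hlen_le w.length (Submodule.mem_map_of_mem (single_mem_Hlen w)))

lemma piL_Phi (n : ℕ) (x : H) : piL n (Phi x) = Phi (piL n x) := by
  induction x using Finsupp.induction_linear with
  | zero => simp
  | add f g hf hg => simp only [map_add, hf, hg]
  | single w b =>
      by_cases h : w.length = n
      · rw [piL_eq_self (h ▸ Phi_single_mem w b),
          piL_eq_self (h ▸ Finsupp.single_mem_supported ℚ b rfl)]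
      · rw [piL_eq_zero (Phi_single_mem w b) h,
          piL_eq_zero (Finsupp.single_mem_supported ℚ b rfl) h, map_zero]

lemma inj_on_Hlen {n : ℕ} {x : H} (hx : x ∈ Hlen n) (h0 : Phi x = 0) : x = 0 := by
  haveI := fd_Hlen n
  have hmap : ∀ y ∈ Hlen n, Phi y ∈ Hlen n :=
    fun y hy => map_Phi_Hlen_le n (Submodule.mem_map_of_mem hy)
  set f : Hlen n →ₗ[ℚ] Hlen n := Phi.restrict hmap with hf
  have hsurj : Function.Surjective f := by
    rintro ⟨y, hy⟩
    rw [← map_Phi_Hlen n] at hy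
    obtain ⟨z, hz, hzy⟩ := hy
    exact ⟨⟨z, hz⟩, Subtype.ext hzy⟩
  have hinj : Function.Injective f := LinearMap.injective_iff_surjective.mpr hsurj
  have : f ⟨x, hx⟩ = f 0 := by
    apply Subtype.ext
    simpa [hf, LinearMap.restrict_apply] using h0
  simpa using congrArg Subtype.val (hinj this)

lemma Phi_injective : Function.Injective Phi := by
  rw [injective_iff_map_eq_zero]
  intro x hx
  ext w
  have h1 : piL w.length x = 0 := by
    apply inj_on_Hlen (piL_mem_Hlen _ x)
    rw [← piL_Phi, hx, map_zero]
  have h2 : (piL w.length x) w = 0 := by rw [h1]; rfl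
  rw [piL_apply, Finsupp.filter_apply] at h2
  simpa using h2

lemma Phi_surjective : Function.Surjective Phi := by
  intro x
  suffices h : x ∈ LinearMap.range Phi by exact h
  induction x using Finsupp.induction_linear with
  | zero => exact Submodule.zero_mem _
  | add f g hf hg => exact Submodule.add_mem _ hf hg
  | single w b =>
      have : Finsupp.single w b = b • Finsupp.single w (1:ℚ) := by
        rw [Finsupp.smul_single, smul_eq_mul, mul_one]
      rw [this]
      apply Submodule.smul_mem
      obtain ⟨z, _, hz⟩ := single_mem_map_Phi (leadB w + 1) w (by omega)
      exact ⟨z, hz⟩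


/-- words with exactly `k` leading `b`s -/
noncomputable def E (k : ℕ) : Submodule ℚ H :=
  Finsupp.supported ℚ ℚ {w : Word | leadB w = k}

lemma SHb_eq_map (k : ℕ) : SHb k = Submodule.map Phi (E k) := by
  rw [E, Finsupp.supported_eq_span_single, Submodule.map_span, SHb]
  congr 1
  ext x
  simp only [Set.mem_setOf_eq, Set.mem_image]
  constructor
  · rintro ⟨w, hw, rfl⟩
    refine ⟨Finsupp.single (bW k ++ w) 1, ⟨bW k ++ w, leadB_bW_append k hw, rfl⟩, ?_⟩
    rw [Phi_single, gen, strip_bW_append k hw, leadB_bW_append k hw]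
  · rintro ⟨x, ⟨w, hw, rfl⟩, rfl⟩
    have hw' : leadB w = k := hw
    exact ⟨strip w, wplus_strip w, by rw [Phi_single, gen, hw']⟩

lemma indep_E : iSupIndep E := by
  intro k
  refine Disjoint.mono_right ?_
    (Finsupp.disjoint_supported_supported
      (s := {w : Word | leadB w = k}) (t := {w : Word | leadB w ≠ k})
      (by simp [Set.disjoint_left]))
  apply iSup_le; intro j; apply iSup_le; intro hj
  exact Finsupp.supported_mono (fun w hw => by
    simp only [Set.mem_setOf_eq] at hw ⊢
    rw [hw]; exact hj)

lemma sup_E : ⨆ k, E k = ⊤ := by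
  have h1 : (⋃ k, {w : Word | leadB w = k}) = Set.univ := by
    ext w; simp only [Set.mem_iUnion, Set.mem_setOf_eq, Set.mem_univ, iff_true]
    exact ⟨leadB w, rfl⟩
  have h2 := Finsupp.supported_iUnion (M := ℚ) (R := ℚ) (fun k : ℕ => {w : Word | leadB w = k})
  rw [h1, Finsupp.supported_univ] at h2
  exact h2.symm


/-- `ℋ` is the direct sum over `k ≥ 0` of the subspaces `ℋ⁺ * b^{*k}`; equivalently,
the map `ℋ⁺ ⊗ ℚ[X] → ℋ`, `h ⊗ X^k ↦ h * b^{*k}`, is a vector-space isomorphism. -/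
theorem statement10 : DirectSum.IsInternal fun k : ℕ => SHb k := by
  classical
  rw [DirectSum.isInternal_submodule_iff_iSupIndep_and_iSup_eq_top]
  set e : H ≃ₗ[ℚ] H := LinearEquiv.ofBijective Phi ⟨Phi_injective, Phi_surjective⟩ with he
  have hmap : ∀ k, SHb k = Submodule.map (e : H →ₗ[ℚ] H) (E k) := by
    intro k
    rw [SHb_eq_map k]
    ext x
    simp only [Submodule.mem_map]
    constructor
    · rintro ⟨y, hy, rfl⟩; exact ⟨y, hy, rfl⟩
    · rintro ⟨y, hy, rfl⟩; exact ⟨y, hy, rfl⟩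
  constructor
  · have h := indep_E.map_orderIso (Submodule.orderIsoMapComap e)
    have heq : (fun k : ℕ => SHb k) = (⇑(Submodule.orderIsoMapComap e) ∘ E) := by
      funext k
      rw [hmap k]
      rfl
    rw [heq]
    exact h
  · have heq : (fun k : ℕ => SHb k) = fun k => Submodule.map e.toLinearMap (E k) := by
      funext k; rw [hmap k]
    rw [heq, ← Submodule.map_iSup, sup_E, Submodule.map_top, LinearEquiv.range]
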